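/- Let f, g : ℝ^d → [0,∞) be proper log-concave functions with g of bounded support, and fix s > 0. If h₁ and h₂ are both solutions of the Positive position John s-problem for f and g (i.e., both maximize ∫h^s over h(x) = α·g(A⁻¹(x−a)) with A positive definite, α > 0, subject to h ≤ f), then h₁ = h₂. -/

import Mathlib

open MeasureTheory
noncomputable section

/-- `h` is a positive position of `g`: `h(x) = α·g(A⁻¹(x−a))` with `A` positive definite,
`α > 0`. -/
def IsPositivePosition {d : ℕ} (g h : (Fin d → ℝ) → ℝ) : Prop :=
  ∃ A : Matrix (Fin d) (Fin d) ℝ, ∃ α : ℝ, ∃ a : Fin d → ℝ,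
    A.PosDef ∧ 0 < α ∧ h = fun x => α * g (A⁻¹.mulVec (x - a))


open Matrix


lemma aux_integral_comp {d : ℕ} {φ : (Fin d → ℝ) → ℝ}
    (hφ : AEStronglyMeasurable φ (volume : Measure (Fin d → ℝ)))
    {A : Matrix (Fin d) (Fin d) ℝ} (hA : A.PosDef) (a : Fin d → ℝ) :
    ∫ x, φ (A⁻¹.mulVec (x - a)) = A.det * ∫ x, φ x := by
  have hdet : A.det ≠ 0 := hA.det_pos.ne'
  have hdetinv : (A⁻¹).det = (A.det)⁻¹ := by
    rw [Matrix.det_nonsing_inv, Ring.inverse_eq_inv']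
  have step1 : ∫ x, φ (A⁻¹.mulVec (x - a)) = ∫ x, φ (A⁻¹.mulVec x) :=
    integral_sub_right_eq_self (fun y => φ (A⁻¹.mulVec y)) a
  have hd' : LinearMap.det (Matrix.toLin' A⁻¹) ≠ 0 := by
    rw [LinearMap.det_toLin', hdetinv]
    exact inv_ne_zero hdet
  have hmap := Real.map_linearMap_volume_pi_eq_smul_volume_pi hd'
  have hmeas : AEMeasurable (Matrix.toLin' A⁻¹) (volume : Measure (Fin d → ℝ)) :=
    (Matrix.toLin' A⁻¹).continuous_of_finiteDimensional.measurable.aemeasurable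
  have hφ' : AEStronglyMeasurable φ (Measure.map (Matrix.toLin' A⁻¹) volume) := by
    rw [hmap]; exact hφ.mono_ac Measure.smul_absolutelyContinuous
  have step2 : ∫ x, φ (A⁻¹.mulVec x) = ∫ y, φ y ∂(Measure.map (Matrix.toLin' A⁻¹) volume) := by
    rw [integral_map hmeas hφ']
    simp [Matrix.toLin'_apply]
  rw [step1, step2, hmap, integral_smul_measure]
  have habs : |(LinearMap.det (Matrix.toLin' A⁻¹))⁻¹| = A.det := by
    rw [LinearMap.det_toLin', hdetinv, inv_inv, abs_of_pos hA.det_pos]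
  rw [habs, ENNReal.toReal_ofReal hA.det_pos.le]
  simp


lemma aux_bdd {d : ℕ} {g : (Fin d → ℝ) → ℝ} (hg0 : ∀ x, 0 ≤ g x)
    (hgusc : UpperSemicontinuous g)
    (hgsupp : Bornology.IsBounded {x | 0 < g x}) :
    ∃ M : ℝ, 0 < M ∧ ∀ x, g x ≤ M := by
  set K := closure {x | 0 < g x} with hK
  have hKc : IsCompact K := hgsupp.isCompact_closure
  have hcover : K ⊆ ⋃ y ∈ K, g ⁻¹' Set.Iio (g y + 1) := fun z hz =>
    Set.mem_biUnion hz (by simp)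
  obtain ⟨b', hb'sub, hb'fin, hb'cov⟩ := hKc.elim_finite_subcover_image
    (fun y _ => hgusc.isOpen_preimage (g y + 1)) hcover
  have hfin : ((fun y => g y + 1) '' b').Finite := hb'fin.image _
  obtain ⟨M₀, hM₀⟩ := hfin.bddAbove
  refine ⟨max M₀ 1, lt_max_of_lt_right one_pos, fun x => ?_⟩
  by_cases hx : x ∈ K
  · obtain ⟨y, hy, hxy⟩ := Set.mem_iUnion₂.1 (hb'cov hx)
    have : g x < g y + 1 := hxy
    have h2 : g y + 1 ≤ M₀ := hM₀ (Set.mem_image_of_mem _ hy)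
    exact le_max_of_le_left (le_of_lt (lt_of_lt_of_le this h2))
  · have : ¬ 0 < g x := fun h => hx (subset_closure h)
    have : g x = 0 := le_antisymm (not_lt.1 this) (hg0 x)
    rw [this]
    exact le_max_of_le_right zero_le_one


lemma aux_int_rpow {d : ℕ} {g : (Fin d → ℝ) → ℝ} {s : ℝ} (hs : 0 < s)
    (hg0 : ∀ x, 0 ≤ g x) (hgusc : UpperSemicontinuous g)
    (hgsupp : Bornology.IsBounded {x | 0 < g x})
    {M : ℝ} (hM : ∀ x, g x ≤ M) :
    Integrable (fun x => g x ^ s) (volume : Measure (Fin d → ℝ)) := by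
  obtain ⟨R, hR⟩ := hgsupp.subset_closedBall (0 : Fin d → ℝ)
  have hgm : Measurable g := hgusc.measurable
  have hmeas : Measurable (fun x => g x ^ s) :=
    (Real.continuous_rpow_const hs.le).measurable.comp hgm
  refine Integrable.mono' (g := (Metric.closedBall (0 : Fin d → ℝ) R).indicator
      (fun _ => M ^ s)) ?_ hmeas.aestronglyMeasurable ?_
  · rw [integrable_indicator_iff measurableSet_closedBall]
    exact integrableOn_const ((isCompact_closedBall _ _).measure_lt_top.ne)
  · refine Filter.Eventually.of_forall fun x => ?_
    rw [Real.norm_eq_abs, abs_of_nonneg (Real.rpow_nonneg (hg0 x) s)]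
    by_cases hx : x ∈ Metric.closedBall (0 : Fin d → ℝ) R
    · rw [Set.indicator_of_mem hx]
      exact Real.rpow_le_rpow (hg0 x) (hM x) hs.le
    · rw [Set.indicator_of_notMem hx]
      have : g x = 0 := le_antisymm (not_lt.1 fun h => hx (hR h)) (hg0 x)
      rw [this, Real.zero_rpow hs.ne']

lemma aux_J_pos {d : ℕ} {g : (Fin d → ℝ) → ℝ} {s : ℝ} (hs : 0 < s)
    (hg0 : ∀ x, 0 ≤ g x) (hgint : Integrable g (volume : Measure (Fin d → ℝ)))
    (hgpos : 0 < ∫ x, g x)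
    (hint : Integrable (fun x => g x ^ s) (volume : Measure (Fin d → ℝ))) :
    0 < ∫ x, g x ^ s := by
  rw [integral_pos_iff_support_of_nonneg (fun x => Real.rpow_nonneg (hg0 x) s) hint]
  have hsupp : (Function.support fun x => g x ^ s) = Function.support g := by
    ext x
    simp only [Function.mem_support]
    constructor
    · intro h hx; rw [hx] at h; exact h (Real.zero_rpow hs.ne')
    · intro h
      have : 0 < g x := lt_of_le_of_ne (hg0 x) (Ne.symm h)
      exact (Real.rpow_pos_of_pos this s).ne'
  rw [hsupp]
  exact (integral_pos_iff_support_of_nonneg hg0 hgint).1 hgpos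


lemma aux_posdef_conj {d : ℕ} {A : Matrix (Fin d) (Fin d) ℝ} (hA : A.PosDef)
    (B : Matrix (Fin d) (Fin d) ℝ) (hB : Function.Injective (B.mulVec)) :
    (Bᴴ * A * B).PosDef := by
  rw [Matrix.posDef_iff_dotProduct_mulVec]
  constructor
  · exact Matrix.isHermitian_conjTranspose_mul_mul B hA.1
  · intro x hx
    have hBx : B *ᵥ x ≠ 0 := fun h => hx (hB (h.trans (B.mulVec_zero).symm))
    simpa only [Matrix.star_mulVec, Matrix.dotProduct_mulVec, Matrix.vecMul_vecMul] using
      hA.dotProduct_mulVec_pos hBx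

open scoped MatrixOrder

lemma aux_minkowski {d : ℕ} {A B : Matrix (Fin d) (Fin d) ℝ} (hA : A.PosDef) (hB : B.PosDef)
    (hne : A ≠ B) :
    Real.sqrt (A.det * B.det) < (((1:ℝ)/2) • (A + B)).det := by
  classical
  set C := CFC.sqrt A with hCdef
  have hC2 : C ^ 2 = A := CFC.sq_sqrt A hA.posSemidef.nonneg
  have hCherm : C.IsHermitian := (CFC.sqrt_nonneg A).posSemidef.1
  have hCdetsq : C.det ^ 2 = A.det := by rw [← Matrix.det_pow, hC2]
  have hCdet : C.det ≠ 0 := by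
    intro h
    rw [h] at hCdetsq
    simp only [ne_eq, zero_pow, OfNat.ofNat_ne_zero, not_false_eq_true] at hCdetsq
    exact hA.det_pos.ne' hCdetsq.symm
  have hCunit : IsUnit C.det := isUnit_iff_ne_zero.2 hCdet
  have hCC : C * C = A := by rw [← pow_two, hC2]
  have hCiherm : (C⁻¹).IsHermitian := hCherm.inv
  set M := C⁻¹ * B * C⁻¹ with hMdef
  have hCinj : Function.Injective ((C⁻¹).mulVec) := by
    intro x y hxy
    have h2 := congrArg (C.mulVec) hxy
    rwa [Matrix.mulVec_mulVec, Matrix.mulVec_mulVec, Matrix.mul_nonsing_inv _ hCunit,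
      Matrix.one_mulVec, Matrix.one_mulVec] at h2
  have hMpos : M.PosDef := by
    have := aux_posdef_conj hB (C⁻¹) hCinj
    rwa [hCiherm.eq] at this
  have hBM : C * M * C = B := by
    simp only [hMdef, Matrix.mul_assoc]
    rw [Matrix.nonsing_inv_mul _ hCunit, Matrix.mul_one, ← Matrix.mul_assoc,
      Matrix.mul_nonsing_inv _ hCunit, Matrix.one_mul]
  have hMne : M ≠ 1 := by
    intro h
    apply hne
    rw [← hBM, h, Matrix.mul_one, hCC]
  have hdetB : B.det = A.det * M.det := by
    rw [← hBM, Matrix.det_mul, Matrix.det_mul, ← hCdetsq]; ring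
  set hMh : M.IsHermitian := hMpos.1 with hMhdef
  set lam : Fin d → ℝ := hMh.eigenvalues with hlam
  have hlampos : ∀ i, 0 < lam i := fun i => hMpos.eigenvalues_pos i
  set U : Matrix (Fin d) (Fin d) ℝ := (hMh.eigenvectorUnitary : Matrix (Fin d) (Fin d) ℝ)
    with hU
  have hUU : U * star U = 1 := (Matrix.mem_unitaryGroup_iff).mp hMh.eigenvectorUnitary.2
  have hspec : M = U * Matrix.diagonal (RCLike.ofReal ∘ lam) * star U := hMh.spectral_theorem
  have hdetM : M.det = ∏ i, lam i := by
    have := hMh.det_eq_prod_eigenvalues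
    simpa using this
  -- existence of a non-1 eigenvalue
  have hex : ∃ i, lam i ≠ 1 := by
    by_contra h
    push_neg at h
    apply hMne
    have hD1 : Matrix.diagonal (RCLike.ofReal ∘ lam) = (1 : Matrix (Fin d) (Fin d) ℝ) := by
      have hfun : RCLike.ofReal ∘ lam = fun _ : Fin d => (1:ℝ) := funext fun i => by simp [h i]
      rw [hfun, Matrix.diagonal_one]
    rw [hspec, hD1, Matrix.mul_one, hUU]
  -- determinant of the half sum
  have hD : ((1:ℝ)/2) • ((1 : Matrix (Fin d) (Fin d) ℝ) + Matrix.diagonal (RCLike.ofReal ∘ lam))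
      = Matrix.diagonal (fun i => (1 + lam i)/2) := by
    ext i j
    by_cases hij : i = j
    · subst hij
      simp [Matrix.smul_apply, Matrix.add_apply, Matrix.diagonal_apply_eq, Matrix.one_apply_eq]
      ring
    · simp [Matrix.smul_apply, Matrix.add_apply, Matrix.diagonal_apply_ne _ hij,
        Matrix.one_apply_ne hij]
  have h1M : ((1:ℝ)/2) • ((1 : Matrix (Fin d) (Fin d) ℝ) + M)
      = U * Matrix.diagonal (fun i => (1 + lam i)/2) * star U := by
    have h1 : (1 : Matrix (Fin d) (Fin d) ℝ) = U * 1 * star U := by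
      rw [Matrix.mul_one, hUU]
    calc ((1:ℝ)/2) • ((1 : Matrix (Fin d) (Fin d) ℝ) + M)
        = ((1:ℝ)/2) • (U * 1 * star U + U * Matrix.diagonal (RCLike.ofReal ∘ lam) * star U) := by
          rw [← h1, ← hspec]
      _ = ((1:ℝ)/2) • (U * ((1 + Matrix.diagonal (RCLike.ofReal ∘ lam)) * star U)) := by
          rw [Matrix.mul_assoc, Matrix.mul_assoc, ← Matrix.mul_add, ← Matrix.add_mul]
      _ = U * (((1:ℝ)/2) • (1 + Matrix.diagonal (RCLike.ofReal ∘ lam))) * star U := by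
          rw [Matrix.mul_smul, Matrix.smul_mul]
          simp only [Matrix.mul_assoc]
      _ = U * Matrix.diagonal (fun i => (1 + lam i)/2) * star U := by rw [hD]
  have hUdet : U.det * (star U).det = 1 := by
    rw [← Matrix.det_mul, hUU, Matrix.det_one]
  have hdethalf2 : (((1:ℝ)/2) • ((1 : Matrix (Fin d) (Fin d) ℝ) + M)).det
      = ∏ i, (1 + lam i)/2 := by
    rw [h1M, Matrix.det_mul, Matrix.det_mul, Matrix.det_diagonal]
    linear_combination (∏ i, (1 + lam i)/2) * hUdet
  have hhalf : ((1:ℝ)/2) • (A + B) = C * (((1:ℝ)/2) • (1 + M)) * C := by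
    rw [Matrix.mul_smul, Matrix.smul_mul, Matrix.mul_add, Matrix.add_mul, Matrix.mul_one,
      hCC, hBM]
  have hdethalf : (((1:ℝ)/2) • (A + B)).det = A.det * ∏ i, (1 + lam i)/2 := by
    rw [hhalf, Matrix.det_mul, Matrix.det_mul, hdethalf2, ← hCdetsq]; ring
  -- the product inequality
  have hsqrtprod : Real.sqrt (∏ i, lam i) = ∏ i, Real.sqrt (lam i) := by
    have h2 : (∏ i, Real.sqrt (lam i))^2 = ∏ i, lam i := by
      rw [← Finset.prod_pow]
      exact Finset.prod_congr rfl fun i _ => Real.sq_sqrt (hlampos i).le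
    rw [← h2, Real.sqrt_sq (Finset.prod_nonneg fun i _ => Real.sqrt_nonneg _)]
  have hprodlt : ∏ i, Real.sqrt (lam i) < ∏ i, (1 + lam i)/2 := by
    refine Finset.prod_lt_prod (fun i _ => Real.sqrt_pos.2 (hlampos i))
      (fun i _ => ?_) ?_
    · nlinarith [Real.sq_sqrt (hlampos i).le, sq_nonneg (Real.sqrt (lam i) - 1),
        Real.sqrt_nonneg (lam i)]
    · obtain ⟨i, hi⟩ := hex
      refine ⟨i, Finset.mem_univ i, ?_⟩
      have hne1 : Real.sqrt (lam i) - 1 ≠ 0 := by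
        intro h
        exact hi (Real.sqrt_eq_one.1 (by linarith))
      have hsq : 0 < (Real.sqrt (lam i) - 1)^2 :=
        lt_of_le_of_ne (sq_nonneg _) (Ne.symm (pow_ne_zero 2 hne1))
      nlinarith [Real.sq_sqrt (hlampos i).le]
  calc Real.sqrt (A.det * B.det) = Real.sqrt (A.det ^ 2 * M.det) := by
        rw [hdetB]; ring_nf
    _ = A.det * Real.sqrt (M.det) := by
        rw [Real.sqrt_mul (sq_nonneg _), Real.sqrt_sq hA.det_pos.le]
    _ = A.det * ∏ i, Real.sqrt (lam i) := by rw [hdetM, hsqrtprod]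
    _ < A.det * ∏ i, (1 + lam i)/2 := by
        exact mul_lt_mul_of_pos_left hprodlt hA.det_pos
    _ = (((1:ℝ)/2) • (A + B)).det := hdethalf.symm


lemma aux_vecMulVec_mulVec {d : ℕ} (δ : Fin d → ℝ) (x : Fin d → ℝ) :
    Matrix.vecMulVec δ δ *ᵥ x = (δ ⬝ᵥ x) • δ := by
  ext i
  simp only [Matrix.mulVec, Matrix.vecMulVec_apply, dotProduct, Pi.smul_apply,
    smul_eq_mul, Finset.sum_mul]
  exact Finset.sum_congr rfl fun j _ => by ring

lemma aux_psd_vec {d : ℕ} (τ : ℝ) (hτ : 0 ≤ τ) (δ : Fin d → ℝ) :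
    (τ • Matrix.vecMulVec δ δ).PosSemidef := by
  rw [Matrix.posSemidef_iff_dotProduct_mulVec]
  constructor
  · show (τ • Matrix.vecMulVec δ δ)ᴴ = _
    ext i j
    simp [Matrix.conjTranspose_apply, Matrix.vecMulVec_apply, mul_comm]
  · intro x
    rw [Matrix.smul_mulVec, aux_vecMulVec_mulVec]
    have : star x ⬝ᵥ τ • (δ ⬝ᵥ x) • δ = τ * ((δ ⬝ᵥ x) * (δ ⬝ᵥ x)) := by
      simp [dotProduct_smul, smul_eq_mul, star_trivial, dotProduct_comm]
    rw [this]
    nlinarith [sq_nonneg (δ ⬝ᵥ x)]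

lemma aux_posdef_smul {d : ℕ} {A : Matrix (Fin d) (Fin d) ℝ} (hA : A.PosDef) {c : ℝ}
    (hc : 0 < c) : (c • A).PosDef := by
  rw [Matrix.posDef_iff_dotProduct_mulVec]
  constructor
  · show (c • A)ᴴ = _
    rw [Matrix.conjTranspose_smul, star_trivial, hA.1.eq]
  · intro x hx
    rw [Matrix.smul_mulVec, dotProduct_smul, smul_eq_mul]
    exact mul_pos hc (hA.dotProduct_mulVec_pos hx)

lemma aux_mul_vecMulVec {d : ℕ} (A : Matrix (Fin d) (Fin d) ℝ) (w δ : Fin d → ℝ) :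
    A * Matrix.vecMulVec w δ = Matrix.vecMulVec (A *ᵥ w) δ := by
  ext i j
  simp only [Matrix.mul_apply, Matrix.vecMulVec_apply, Matrix.mulVec, dotProduct,
    Finset.sum_mul]
  exact Finset.sum_congr rfl fun k _ => by ring

lemma aux_det_one_add {d : ℕ} (w δ : Fin d → ℝ) (τ : ℝ) :
    ((1 : Matrix (Fin d) (Fin d) ℝ) + τ • Matrix.vecMulVec w δ).det = 1 + τ * (δ ⬝ᵥ w) := by
  have h1 : τ • Matrix.vecMulVec w δ = Matrix.vecMulVec (τ • w) δ := by
    ext i j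
    simp [Matrix.vecMulVec_apply, mul_assoc]
  rw [h1, Matrix.vecMulVec_eq (Fin 1), Matrix.det_one_add_replicateCol_mul_replicateRow]
  simp [dotProduct_smul, smul_eq_mul]



/-- **Uniqueness in the Positive position John `s`-problem** for `g` of bounded support. -/
theorem positive_john_unique {d : ℕ} (s : ℝ) (hs : 0 < s)
    (f g : (Fin d → ℝ) → ℝ)
    (hf0 : ∀ x, 0 ≤ f x) (hfusc : UpperSemicontinuous f)
    (hflc : ∀ x y : Fin d → ℝ, ∀ t : ℝ, 0 ≤ t → t ≤ 1 →
      f x ^ t * f y ^ (1 - t) ≤ f (t • x + (1 - t) • y))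
    (hfint : Integrable f) (hfpos : 0 < ∫ x, f x)
    (hg0 : ∀ x, 0 ≤ g x) (hgusc : UpperSemicontinuous g)
    (hglc : ∀ x y : Fin d → ℝ, ∀ t : ℝ, 0 ≤ t → t ≤ 1 →
      g x ^ t * g y ^ (1 - t) ≤ g (t • x + (1 - t) • y))
    (hgint : Integrable g) (hgpos : 0 < ∫ x, g x)
    (hgsupp : Bornology.IsBounded {x | 0 < g x})
    (h₁ h₂ : (Fin d → ℝ) → ℝ)
    (hp₁ : IsPositivePosition g h₁) (hle₁ : ∀ x, h₁ x ≤ f x)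
    (hmax₁ : ∀ h' : (Fin d → ℝ) → ℝ, IsPositivePosition g h' → (∀ x, h' x ≤ f x) →
      (∫ x, h' x ^ s) ≤ ∫ x, h₁ x ^ s)
    (hp₂ : IsPositivePosition g h₂) (hle₂ : ∀ x, h₂ x ≤ f x)
    (hmax₂ : ∀ h' : (Fin d → ℝ) → ℝ, IsPositivePosition g h' → (∀ x, h' x ≤ f x) →
      (∫ x, h' x ^ s) ≤ ∫ x, h₂ x ^ s) :
    h₁ = h₂ := by
  classical
  have hgm : Measurable g := hgusc.measurable
  have hgsm : AEStronglyMeasurable (fun x => g x ^ s) (volume : Measure (Fin d → ℝ)) :=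
    ((Real.continuous_rpow_const hs.le).measurable.comp hgm).aestronglyMeasurable
  obtain ⟨M, hMpos, hM⟩ := aux_bdd hg0 hgusc hgsupp
  have hgsint : Integrable (fun x => g x ^ s) (volume : Measure (Fin d → ℝ)) :=
    aux_int_rpow hs hg0 hgusc hgsupp hM
  set J := ∫ x, g x ^ s with hJ
  have hJpos : 0 < J := aux_J_pos hs hg0 hgint hgpos hgsint
  have Ifor : ∀ (A : Matrix (Fin d) (Fin d) ℝ) (α : ℝ) (a : Fin d → ℝ), A.PosDef → 0 < α →
      (∫ x, (α * g (A⁻¹.mulVec (x - a))) ^ s) = α ^ s * A.det * J := by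
    intro A α a hA hα
    have hpt : ∀ x : Fin d → ℝ, (α * g (A⁻¹.mulVec (x - a))) ^ s
        = α ^ s * g (A⁻¹.mulVec (x - a)) ^ s := fun x => Real.mul_rpow hα.le (hg0 _)
    calc ∫ x, (α * g (A⁻¹.mulVec (x - a))) ^ s
        = ∫ x, α ^ s * g (A⁻¹.mulVec (x - a)) ^ s := by simp_rw [hpt]
      _ = α ^ s * ∫ x, g (A⁻¹.mulVec (x - a)) ^ s := integral_const_mul _ _
      _ = α ^ s * (A.det * J) := by
          rw [(aux_integral_comp hgsm hA a :
            (∫ x, g (A⁻¹.mulVec (x - a)) ^ s) = A.det * J)]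
      _ = α ^ s * A.det * J := by ring
  by_contra hne
  obtain ⟨A₁, α₁, a₁, hA₁, hα₁, hh₁⟩ := hp₁
  obtain ⟨A₂, α₂, a₂, hA₂, hα₂, hh₂⟩ := hp₂
  have hA₁unit : IsUnit A₁.det := isUnit_iff_ne_zero.2 hA₁.det_pos.ne'
  have hA₂unit : IsUnit A₂.det := isUnit_iff_ne_zero.2 hA₂.det_pos.ne'
  have hI₁ : (∫ x, h₁ x ^ s) = α₁ ^ s * A₁.det * J := by
    rw [hh₁]; exact Ifor A₁ α₁ a₁ hA₁ hα₁
  have hI₂ : (∫ x, h₂ x ^ s) = α₂ ^ s * A₂.det * J := by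
    rw [hh₂]; exact Ifor A₂ α₂ a₂ hA₂ hα₂
  have hIeq : (∫ x, h₁ x ^ s) = ∫ x, h₂ x ^ s :=
    le_antisymm (hmax₂ h₁ ⟨A₁, α₁, a₁, hA₁, hα₁, hh₁⟩ hle₁)
      (hmax₁ h₂ ⟨A₂, α₂, a₂, hA₂, hα₂, hh₂⟩ hle₂)
  have key : ∀ (A : Matrix (Fin d) (Fin d) ℝ) (α : ℝ) (a : Fin d → ℝ),
      (hA : A.PosDef) → (hα : 0 < α) →
      (∀ x, α * g (A⁻¹.mulVec (x - a)) ≤ f x) → α ^ s * A.det * J ≤ α₁ ^ s * A₁.det * J := by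
    intro A α a hA hα hle
    have hm := hmax₁ (fun x => α * g (A⁻¹.mulVec (x - a))) ⟨A, α, a, hA, hα, rfl⟩ hle
    beta_reduce at hm
    rwa [hI₁, Ifor A α a hA hα] at hm
  have hD12 : α₁ ^ s * A₁.det = α₂ ^ s * A₂.det := by
    have h := hIeq
    rw [hI₁, hI₂] at h
    exact mul_right_cancel₀ hJpos.ne' h
  -- Step A : A₁ = A₂
  have hAeq : A₁ = A₂ := by
    by_contra hAne
    set Abar := ((1:ℝ)/2) • (A₁ + A₂) with hAbar
    have hAbarpos : Abar.PosDef := aux_posdef_smul (hA₁.add hA₂) one_half_pos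
    have hAbarunit : IsUnit Abar.det := isUnit_iff_ne_zero.2 hAbarpos.det_pos.ne'
    set abar := ((1:ℝ)/2) • (a₁ + a₂) with habar
    set β := (α₁ * α₂) ^ ((1:ℝ)/2) with hβ
    have hβpos : 0 < β := Real.rpow_pos_of_pos (mul_pos hα₁ hα₂) _
    have hle' : ∀ x, β * g (Abar⁻¹.mulVec (x - abar)) ≤ f x := by
      intro x
      set u := Abar⁻¹.mulVec (x - abar) with hu
      rcases lt_or_eq_of_le (hg0 u) with hgu | hgu
      · have hAu : Abar.mulVec u = x - abar := by
          rw [hu, Matrix.mulVec_mulVec, Matrix.mul_nonsing_inv _ hAbarunit, Matrix.one_mulVec]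
        have h2 : Abar.mulVec u
            = ((1:ℝ)/2) • (A₁.mulVec u) + ((1:ℝ)/2) • (A₂.mulVec u) := by
          rw [hAbar, Matrix.smul_mulVec, Matrix.add_mulVec, smul_add]
        have hxdec : x = ((1:ℝ)/2) • (a₁ + A₁.mulVec u) + ((1:ℝ)/2) • (a₂ + A₂.mulVec u) := by
          calc x = abar + Abar.mulVec u := by rw [hAu]; abel
            _ = ((1:ℝ)/2) • (a₁ + A₁.mulVec u) + ((1:ℝ)/2) • (a₂ + A₂.mulVec u) := by
                rw [h2, habar]; module
        have hf₁ : α₁ * g u ≤ f (a₁ + A₁.mulVec u) := by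
          have h3 := hle₁ (a₁ + A₁.mulVec u)
          rw [hh₁] at h3
          simpa [add_sub_cancel_left, Matrix.mulVec_mulVec,
            Matrix.nonsing_inv_mul _ hA₁unit, Matrix.one_mulVec] using h3
        have hf₂ : α₂ * g u ≤ f (a₂ + A₂.mulVec u) := by
          have h3 := hle₂ (a₂ + A₂.mulVec u)
          rw [hh₂] at h3
          simpa [add_sub_cancel_left, Matrix.mulVec_mulVec,
            Matrix.nonsing_inv_mul _ hA₂unit, Matrix.one_mulVec] using h3
        have h12 := hflc (a₁ + A₁.mulVec u) (a₂ + A₂.mulVec u) ((1:ℝ)/2)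
          (by norm_num) (by norm_num)
        rw [show (1:ℝ) - 1/2 = 1/2 by norm_num, ← hxdec] at h12
        have hprod : (α₁ * g u) ^ ((1:ℝ)/2) * (α₂ * g u) ^ ((1:ℝ)/2) ≤ f x :=
          le_trans (mul_le_mul (Real.rpow_le_rpow (by positivity) hf₁ (by norm_num))
            (Real.rpow_le_rpow (by positivity) hf₂ (by norm_num))
            (Real.rpow_nonneg (by positivity) _) (Real.rpow_nonneg (hf0 _) _)) h12
        have hcalc : (α₁ * g u) ^ ((1:ℝ)/2) * (α₂ * g u) ^ ((1:ℝ)/2) = β * g u := by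
          rw [← Real.mul_rpow (by positivity) (by positivity),
            show α₁ * g u * (α₂ * g u) = (α₁ * α₂) * (g u * g u) by ring,
            Real.mul_rpow (by positivity) (by positivity), hβ]
          congr 1
          rw [show g u * g u = g u ^ (2:ℝ) by
            rw [show (2:ℝ) = (1:ℝ)+1 by norm_num, Real.rpow_add hgu, Real.rpow_one],
            ← Real.rpow_mul (hg0 u)]
          norm_num
        calc β * g u = (α₁ * g u) ^ ((1:ℝ)/2) * (α₂ * g u) ^ ((1:ℝ)/2) := hcalc.symm
          _ ≤ f x := hprod
      · rw [← hgu, mul_zero]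
        exact hf0 x
    have hval := key Abar β abar hAbarpos hβpos hle'
    have hmink := aux_minkowski hA₁ hA₂ hAne
    rw [← hAbar] at hmink
    have hβs : β ^ s = Real.sqrt (α₁ ^ s * α₂ ^ s) := by
      rw [hβ, ← Real.mul_rpow hα₁.le hα₂.le, Real.sqrt_eq_rpow,
        ← Real.rpow_mul (mul_pos hα₁ hα₂).le, ← Real.rpow_mul (mul_pos hα₁ hα₂).le,
        mul_comm s (1/2)]
    have hDpos : 0 < α₁ ^ s * A₁.det := mul_pos (Real.rpow_pos_of_pos hα₁ s) hA₁.det_pos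
    have hsq : Real.sqrt ((α₁ ^ s * A₁.det) * (α₂ ^ s * A₂.det)) = α₁ ^ s * A₁.det := by
      rw [← hD12, Real.sqrt_mul_self hDpos.le]
    have hlt : α₁ ^ s * A₁.det * J < β ^ s * Abar.det * J := by
      have h1 : α₁ ^ s * A₁.det < β ^ s * Abar.det := by
        calc α₁ ^ s * A₁.det
            = Real.sqrt ((α₁ ^ s * A₁.det) * (α₂ ^ s * A₂.det)) := hsq.symm
          _ = Real.sqrt (α₁ ^ s * α₂ ^ s) * Real.sqrt (A₁.det * A₂.det) := by
              rw [show (α₁ ^ s * A₁.det) * (α₂ ^ s * A₂.det)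
                = (α₁ ^ s * α₂ ^ s) * (A₁.det * A₂.det) by ring,
                Real.sqrt_mul (by positivity)]
          _ < Real.sqrt (α₁ ^ s * α₂ ^ s) * Abar.det :=
              mul_lt_mul_of_pos_left hmink (Real.sqrt_pos.2 (by positivity))
          _ = β ^ s * Abar.det := by rw [hβs]
      exact mul_lt_mul_of_pos_right h1 hJpos
    exact absurd hval (not_le.2 hlt)
  -- Step B : α₁ = α₂
  have hαeq : α₁ = α₂ := by
    have h := hD12
    rw [hAeq] at h
    have h2 : α₁ ^ s = α₂ ^ s := mul_right_cancel₀ hA₂.det_pos.ne' h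
    rcases lt_trichotomy α₁ α₂ with hlt | he | hgt
    · exact absurd h2 (ne_of_lt (Real.rpow_lt_rpow hα₁.le hlt hs))
    · exact he
    · exact absurd h2.symm (ne_of_lt (Real.rpow_lt_rpow hα₂.le hgt hs))
  -- Step C : translation
  have haneq : a₁ ≠ a₂ := by
    intro h
    exact hne (by rw [hh₁, hh₂, hAeq, hαeq, h])
  set δ := a₁ - a₂ with hδdef
  have hδ : δ ≠ 0 := sub_ne_zero.2 haneq
  obtain ⟨R, hRsub⟩ := hgsupp.subset_closedBall (0 : Fin d → ℝ)
  set R' := max R 0 with hR'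
  have hR'nn : (0:ℝ) ≤ R' := le_max_right R 0
  have hRsub' : {x | 0 < g x} ⊆ Metric.closedBall 0 R' :=
    hRsub.trans (Metric.closedBall_subset_closedBall (le_max_left _ _))
  set D0 := ∑ i, |δ i| with hD0
  have hD0nn : 0 ≤ D0 := Finset.sum_nonneg fun i _ => abs_nonneg _
  have hDRnn : 0 ≤ D0 * R' := mul_nonneg hD0nn hR'nn
  have hden : (0:ℝ) < 2 * (D0 * R' + 1) := by nlinarith
  set τ := (2 * (D0 * R' + 1))⁻¹ with hτdef
  have hτpos : 0 < τ := inv_pos.2 hden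
  set w := A₁⁻¹.mulVec δ with hw
  have hq : 0 < δ ⬝ᵥ w := by
    have h3 := hA₁.inv.dotProduct_mulVec_pos hδ
    simpa [hw] using h3
  set Bm := A₁ + τ • Matrix.vecMulVec δ δ with hBm
  have hBpos : Bm.PosDef := hA₁.add_posSemidef (aux_psd_vec τ hτpos.le δ)
  have hBunit : IsUnit Bm.det := isUnit_iff_ne_zero.2 hBpos.det_pos.ne'
  have hAw : A₁.mulVec w = δ := by
    rw [hw, Matrix.mulVec_mulVec, Matrix.mul_nonsing_inv _ hA₁unit, Matrix.one_mulVec]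
  have hBdet : Bm.det = A₁.det * (1 + τ * (δ ⬝ᵥ w)) := by
    have hfac : Bm = A₁ * (1 + τ • Matrix.vecMulVec w δ) := by
      rw [Matrix.mul_add, Matrix.mul_one, Matrix.mul_smul, aux_mul_vecMulVec, hAw, hBm]
    rw [hfac, Matrix.det_mul, aux_det_one_add]
  have hBdetgt : A₁.det < Bm.det := by
    rw [hBdet]
    nlinarith [hA₁.det_pos, mul_pos hτpos hq]
  set c := ((1:ℝ)/2) • (a₁ + a₂) with hc
  have hle' : ∀ x, α₁ * g (Bm⁻¹.mulVec (x - c)) ≤ f x := by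
    intro x
    set u := Bm⁻¹.mulVec (x - c) with hu
    rcases lt_or_eq_of_le (hg0 u) with hgu | hgu
    · have hunorm : ∀ i, |u i| ≤ R' := by
        intro i
        have h1 : u ∈ Metric.closedBall (0 : Fin d → ℝ) R' := hRsub' hgu
        have h2 : ‖u‖ ≤ R' := by rwa [Metric.mem_closedBall, dist_zero_right] at h1
        exact le_trans (norm_le_pi_norm u i) h2
      set r := τ * (δ ⬝ᵥ u) with hr
      have hdotu : |δ ⬝ᵥ u| ≤ D0 * R' := by
        calc |δ ⬝ᵥ u| ≤ ∑ i, |δ i * u i| := Finset.abs_sum_le_sum_abs _ _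
          _ ≤ ∑ i, |δ i| * R' := by
              refine Finset.sum_le_sum fun i _ => ?_
              rw [abs_mul]
              exact mul_le_mul_of_nonneg_left (hunorm i) (abs_nonneg _)
          _ = D0 * R' := by rw [← Finset.sum_mul]
      have hrbound : |r| ≤ 1/2 := by
        rw [hr, abs_mul, abs_of_pos hτpos, hτdef, inv_mul_le_iff₀ hden]
        nlinarith
      obtain ⟨hr1, hr2⟩ := abs_le.1 hrbound
      set t := 1/2 + r with ht
      have ht0 : (0:ℝ) ≤ t := by rw [ht]; linarith
      have ht1 : t ≤ 1 := by rw [ht]; linarith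
      have hBu : Bm.mulVec u = A₁.mulVec u + r • δ := by
        rw [hBm, Matrix.add_mulVec, Matrix.smul_mulVec, aux_vecMulVec_mulVec,
          smul_smul, hr]
      have hxc : Bm.mulVec u = x - c := by
        rw [hu, Matrix.mulVec_mulVec, Matrix.mul_nonsing_inv _ hBunit, Matrix.one_mulVec]
      have hxeq : x = t • (a₁ + A₁.mulVec u) + (1 - t) • (a₂ + A₁.mulVec u) := by
        calc x = c + (A₁.mulVec u + r • δ) := by rw [← hBu, hxc]; abel
          _ = t • (a₁ + A₁.mulVec u) + (1 - t) • (a₂ + A₁.mulVec u) := by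
              rw [hc, ht, hδdef]; module
      have hf₁ : α₁ * g u ≤ f (a₁ + A₁.mulVec u) := by
        have h3 := hle₁ (a₁ + A₁.mulVec u)
        rw [hh₁] at h3
        simpa [add_sub_cancel_left, Matrix.mulVec_mulVec,
          Matrix.nonsing_inv_mul _ hA₁unit, Matrix.one_mulVec] using h3
      have hf₂ : α₁ * g u ≤ f (a₂ + A₁.mulVec u) := by
        have h3 := hle₂ (a₂ + A₁.mulVec u)
        rw [hh₂, ← hAeq, ← hαeq] at h3
        simpa [add_sub_cancel_left, Matrix.mulVec_mulVec,
          Matrix.nonsing_inv_mul _ hA₁unit, Matrix.one_mulVec] using h3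
      have hflc' := hflc (a₁ + A₁.mulVec u) (a₂ + A₁.mulVec u) t ht0 ht1
      rw [← hxeq] at hflc'
      have hgupos : 0 < α₁ * g u := mul_pos hα₁ hgu
      calc α₁ * g u = (α₁ * g u) ^ t * (α₁ * g u) ^ (1 - t) := by
            rw [← Real.rpow_add hgupos, show t + (1 - t) = (1:ℝ) by ring, Real.rpow_one]
        _ ≤ f (a₁ + A₁.mulVec u) ^ t * f (a₂ + A₁.mulVec u) ^ (1 - t) :=
            mul_le_mul (Real.rpow_le_rpow hgupos.le hf₁ ht0)
              (Real.rpow_le_rpow hgupos.le hf₂ (by linarith))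
              (Real.rpow_nonneg hgupos.le _) (Real.rpow_nonneg (hf0 _) _)
        _ ≤ f x := hflc'
    · rw [← hgu, mul_zero]
      exact hf0 x
  have hval := key Bm α₁ c hBpos hα₁ hle'
  have hlt : α₁ ^ s * A₁.det * J < α₁ ^ s * Bm.det * J := by
    have hαs : 0 < α₁ ^ s := Real.rpow_pos_of_pos hα₁ s
    exact mul_lt_mul_of_pos_right (mul_lt_mul_of_pos_left hBdetgt hαs) hJpos
  exact absurd hval (not_le.2 hlt)
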